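/- Let Γ be the path algebra over a field F of the quiver with vertices 1, ..., N, arrows xᵢ : i → i+1 and xᵢ* : i+1 → i for 1 ≤ i ≤ N−1, modulo the relations x₁x₁* = 0, x_{N-1}* x_{N-1} = 0, and xᵢ* xᵢ = x_{i+1} x_{i+1}* for 1 ≤ i ≤ N−2 (concatenation notation). Then for 1 ≤ i, j ≤ N and k ≥ 0, the space e_i Γ_k e_j of paths of length k from i to j has dimension 1 if |i−j| ≤ k ≤ N−1−|N+1−i−j| and k ≡ i−j (mod 2), and dimension 0 otherwise. -/

import Mathlib

/-! Path algebra of the doubled `A_N` quiver, modulo the Brauer-line relations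
`x₁x₁* = 0`, `x_{N-1}*x_{N-1} = 0`, `xᵢ*xᵢ = x_{i+1}x_{i+1}*`.
A path from vertex `i` is encoded by its list of steps (`true` = `x` going up,
`false` = `x*` going down, concatenation-of-paths convention). -/

/-- All vertices visited by the step list `L` starting at `i` lie in `{1, …, N}`. -/
def okSteps (N : ℕ) : ℤ → List Bool → Prop
  | i, [] => 1 ≤ i ∧ i ≤ (N : ℤ)
  | i, b :: L => 1 ≤ i ∧ i ≤ (N : ℤ) ∧ okSteps N (if b then i + 1 else i - 1) L

/-- The endpoint of the step list `L` starting at `i`. -/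
def targetV : ℤ → List Bool → ℤ
  | i, [] => i
  | i, b :: L => targetV (if b then i + 1 else i - 1) L

/-- `L` encodes a path in the doubled `A_N` quiver from `i` to `j` of length `k`. -/
def IsPathFrom (N : ℕ) (i j : ℤ) (k : ℕ) (L : List Bool) : Prop :=
  okSteps N i L ∧ targetV i L = j ∧ L.length = k

/-- The set of paths from `i` to `j` of length `k`, a basis of `e_i (FQ)_k e_j`. -/
def PathIdx (N : ℕ) (i j : ℤ) (k : ℕ) : Type :=
  {L : List Bool // IsPathFrom N i j k L}

/-- The relators spanning the degree-`k`, `(i,j)`-component of the ideal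
`⟨x₁x₁*, x_{N-1}*x_{N-1}, xᵢ*xᵢ - x_{i+1}x_{i+1}*⟩` inside `e_i (FQ)_k e_j`:
a path containing `x₁x₁*` (up-down at vertex `1`) or `x_{N-1}*x_{N-1}` (down-up at
vertex `N`) is a relator, and so is the difference of two paths related by swapping a
down-up at an interior vertex into the corresponding up-down. -/
def relators (F : Type*) [Field F] (N : ℕ) (i j : ℤ) (k : ℕ) :
    Set (PathIdx N i j k →₀ F) :=
  {v | ∃ A B : List Bool,
    (∃ h : IsPathFrom N i j k (A ++ [true, false] ++ B),
      targetV i A = 1 ∧ v = Finsupp.single ⟨A ++ [true, false] ++ B, h⟩ 1) ∨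
    (∃ h : IsPathFrom N i j k (A ++ [false, true] ++ B),
      targetV i A = (N : ℤ) ∧ v = Finsupp.single ⟨A ++ [false, true] ++ B, h⟩ 1) ∨
    (∃ (h1 : IsPathFrom N i j k (A ++ [false, true] ++ B))
        (h2 : IsPathFrom N i j k (A ++ [true, false] ++ B)),
      2 ≤ targetV i A ∧ targetV i A ≤ (N : ℤ) - 1 ∧
      v = Finsupp.single ⟨A ++ [false, true] ++ B, h1⟩ 1
          - Finsupp.single ⟨A ++ [true, false] ++ B, h2⟩ 1)}

/-- The component `e_i Γ_k e_j` of the quotient path algebra `Γ = FQ/⟨I⟩`. -/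
def PathComp (F : Type*) [Field F] (N : ℕ) (i j : ℤ) (k : ℕ) :=
  (PathIdx N i j k →₀ F) ⧸ Submodule.span F (relators F N i j k)

noncomputable instance (F : Type*) [Field F] (N : ℕ) (i j : ℤ) (k : ℕ) :
    AddCommGroup (PathComp F N i j k) :=
  Submodule.Quotient.addCommGroup _

noncomputable instance (F : Type*) [Field F] (N : ℕ) (i j : ℤ) (k : ℕ) :
    Module F (PathComp F N i j k) :=
  Submodule.Quotient.module _

/-- The class of a path in `e_i Γ_k e_j`. -/
noncomputable def pathClass (F : Type*) [Field F] {N : ℕ} {i j : ℤ} {k : ℕ} (p : PathIdx N i j k) :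
    PathComp F N i j k :=
  Submodule.Quotient.mk (Finsupp.single p 1)


section Aux

lemma okSteps_bounds : ∀ {L : List Bool} {N : ℕ} {i : ℤ}, okSteps N i L → 1 ≤ i ∧ i ≤ (N:ℤ)
  | [], _, _, h => h
  | _ :: _, _, _, h => ⟨h.1, h.2.1⟩

lemma targetV_append : ∀ (A B : List Bool) (i : ℤ), targetV i (A ++ B) = targetV (targetV i A) B
  | [], B, i => rfl
  | a :: A, B, i => by
      simp only [List.cons_append, targetV]
      exact targetV_append A B _

lemma okSteps_append : ∀ (A B : List Bool) (N : ℕ) (i : ℤ),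
    okSteps N i (A ++ B) ↔ okSteps N i A ∧ okSteps N (targetV i A) B
  | [], B, N, i => by
      simp only [List.nil_append, targetV, okSteps]
      exact ⟨fun h => ⟨okSteps_bounds h, h⟩, fun h => h.2⟩
  | a :: A, B, N, i => by
      simp only [List.cons_append, okSteps, targetV, List.append_eq]
      rw [okSteps_append A B]
      tauto

lemma targetV_replicate_true : ∀ (n : ℕ) (i : ℤ), targetV i (List.replicate n true) = i + n
  | 0, i => by simp [targetV]
  | n+1, i => by
      simp only [List.replicate_succ, targetV, if_pos rfl]
      rw [targetV_replicate_true n]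
      push_cast; ring

lemma targetV_replicate_false : ∀ (n : ℕ) (i : ℤ), targetV i (List.replicate n false) = i - n
  | 0, i => by simp [targetV]
  | n+1, i => by
      simp only [List.replicate_succ, targetV, Bool.false_eq_true, if_false]
      rw [targetV_replicate_false n]
      push_cast; ring

lemma okSteps_replicate_true : ∀ (n N : ℕ) (i : ℤ),
    okSteps N i (List.replicate n true) ↔ 1 ≤ i ∧ i + n ≤ (N:ℤ)
  | 0, N, i => by simp [okSteps]
  | n+1, N, i => by
      simp only [List.replicate_succ, okSteps, if_pos rfl]
      rw [okSteps_replicate_true n]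
      push_cast
      omega

lemma okSteps_replicate_false : ∀ (n N : ℕ) (i : ℤ),
    okSteps N i (List.replicate n false) ↔ 1 ≤ i - n ∧ i ≤ (N:ℤ)
  | 0, N, i => by simp [okSteps]
  | n+1, N, i => by
      simp only [List.replicate_succ, okSteps, Bool.false_eq_true, if_false]
      rw [okSteps_replicate_false n]
      push_cast
      omega

lemma targetV_est : ∀ (L : List Bool) (i : ℤ),
    targetV i L - i ≤ L.length ∧ i - targetV i L ≤ L.length ∧
      (targetV i L - i) % 2 = (L.length : ℤ) % 2
  | [], i => by simp [targetV]
  | b :: L, i => by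
      have h := targetV_est L (if b then i + 1 else i - 1)
      simp only [targetV, List.length_cons]
      cases b <;>
        simp only [if_pos rfl, Bool.false_eq_true, if_false] at h ⊢ <;>
        push_cast at h ⊢ <;> omega

lemma targetV_updown (v : ℤ) (B : List Bool) :
    targetV v ([true, false] ++ B) = targetV v B := by
  show targetV v (true :: false :: B) = _
  norm_num [targetV]

lemma targetV_downup (v : ℤ) (B : List Bool) :
    targetV v ([false, true] ++ B) = targetV v B := by
  show targetV v (false :: true :: B) = _
  norm_num [targetV]

lemma okSteps_updown (N : ℕ) (v : ℤ) (B : List Bool) :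
    okSteps N v ([true, false] ++ B) ↔ 1 ≤ v ∧ v + 1 ≤ (N:ℤ) ∧ okSteps N v B := by
  have h0 : okSteps N v (true :: false :: B) ↔
      1 ≤ v ∧ v ≤ (N:ℤ) ∧ 1 ≤ v + 1 ∧ v + 1 ≤ (N:ℤ) ∧ okSteps N (v + 1 - 1) B := by
    simp only [okSteps, reduceIte, Bool.false_eq_true, if_false]
  rw [show ([true, false] ++ B : List Bool) = true :: false :: B from rfl, h0,
    show v + 1 - 1 = v by ring]
  constructor
  · rintro ⟨h1, h2, h3, h4, h5⟩
    exact ⟨h1, h4, h5⟩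
  · rintro ⟨h1, h2, h3⟩
    exact ⟨h1, by omega, by omega, h2, h3⟩

lemma okSteps_downup (N : ℕ) (v : ℤ) (B : List Bool) :
    okSteps N v ([false, true] ++ B) ↔ 1 ≤ v - 1 ∧ v ≤ (N:ℤ) ∧ okSteps N v B := by
  have h0 : okSteps N v (false :: true :: B) ↔
      1 ≤ v ∧ v ≤ (N:ℤ) ∧ 1 ≤ v - 1 ∧ v - 1 ≤ (N:ℤ) ∧ okSteps N (v - 1 + 1) B := by
    simp only [okSteps, reduceIte, Bool.false_eq_true, if_false]
  rw [show ([false, true] ++ B : List Bool) = false :: true :: B from rfl, h0,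
    show v - 1 + 1 = v by ring]
  constructor
  · rintro ⟨h1, h2, h3, h4, h5⟩
    exact ⟨h3, h2, h5⟩
  · rintro ⟨h1, h2, h3⟩
    exact ⟨by omega, h2, h1, by omega, h3⟩

/-- The measure used for termination of the rewriting procedure. -/
def muC (c : Bool) : List Bool → ℕ
  | [] => 0
  | a :: L => (if a = c then L.length else 0) + muC c L

lemma muC_swap (c : Bool) : ∀ (A B : List Bool),
    muC c (A ++ ([c, !c] ++ B)) = muC c (A ++ ([!c, c] ++ B)) + 1
  | [], B => by cases c <;> simp [muC] <;> omega
  | a :: A, B => by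
      have h := muC_swap c A B
      show muC c (a :: (A ++ ([c, !c] ++ B))) = muC c (a :: (A ++ ([!c, c] ++ B))) + 1
      simp only [muC]
      rw [h]
      simp only [List.length_append, List.length_cons]
      omega

lemma eq_replicate_of_no_factor (c : Bool) : ∀ (L : List Bool),
    (∀ A B : List Bool, L ≠ A ++ ([c, !c] ++ B)) →
    ∃ a b : ℕ, L = List.replicate b (!c) ++ List.replicate a c
  | [], _ => ⟨0, 0, rfl⟩
  | d :: L, h => by
      have hL : ∀ A B : List Bool, L ≠ A ++ ([c, !c] ++ B) := by
        intro A B hE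
        exact h (d :: A) B (by rw [hE]; rfl)
      obtain ⟨a, b, hab⟩ := eq_replicate_of_no_factor c L hL
      by_cases hd : d = c
      · rcases b with _ | b
        · exact ⟨a + 1, 0, by simp [hab, hd, List.replicate_succ]⟩
        · exfalso
          apply h [] (List.replicate b (!c) ++ List.replicate a c)
          simp [hab, hd, List.replicate_succ]
      · have hd' : d = !c := by cases c <;> cases d <;> simp_all
        exact ⟨a, b + 1, by simp [hab, hd', List.replicate_succ]⟩

variable (F : Type*) [Field F] (N : ℕ) (i j : ℤ) (k : ℕ)

/-- The canonical (peak-free, for `c = true`, or valley-free, for `c = false`) paths. -/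
def canonSet (c : Bool) : Set (PathIdx N i j k →₀ F) :=
  {v | ∃ (p : PathIdx N i j k) (a b : ℕ),
    p.1 = List.replicate b (!c) ++ List.replicate a c ∧ v = Finsupp.single p 1}

variable {F N i j k}

lemma canon_facts_true (p : PathIdx N i j k) (a b : ℕ)
    (h : p.1 = List.replicate b false ++ List.replicate a true) :
    (a:ℤ) + b = k ∧ i - b + a = j ∧ 1 ≤ i - (b:ℤ) ∧ i - (b:ℤ) + a ≤ (N:ℤ) ∧ i ≤ (N:ℤ) := by
  have hp2 : okSteps N i p.1 ∧ targetV i p.1 = j ∧ p.1.length = k := p.2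
  obtain ⟨hok, htar, hlen⟩ := hp2
  rw [h] at hok htar hlen
  rw [okSteps_append, targetV_replicate_false, okSteps_replicate_false,
    okSteps_replicate_true] at hok
  rw [targetV_append, targetV_replicate_false, targetV_replicate_true] at htar
  simp only [List.length_append, List.length_replicate] at hlen
  exact ⟨by omega, htar, hok.1.1, hok.2.2, hok.1.2⟩

lemma canon_facts_false (p : PathIdx N i j k) (a b : ℕ)
    (h : p.1 = List.replicate b true ++ List.replicate a false) :
    (a:ℤ) + b = k ∧ i + b - a = j ∧ i + (b:ℤ) ≤ (N:ℤ) ∧ 1 ≤ i + (b:ℤ) - a ∧ 1 ≤ i := by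
  have hp2 : okSteps N i p.1 ∧ targetV i p.1 = j ∧ p.1.length = k := p.2
  obtain ⟨hok, htar, hlen⟩ := hp2
  rw [h] at hok htar hlen
  rw [okSteps_append, targetV_replicate_true, okSteps_replicate_true,
    okSteps_replicate_false] at hok
  rw [targetV_append, targetV_replicate_true, targetV_replicate_false] at htar
  simp only [List.length_append, List.length_replicate] at hlen
  exact ⟨by omega, htar, hok.1.2, hok.2.1, hok.1.1⟩

lemma single_mem_span (c : Bool) (p : PathIdx N i j k) :
    Finsupp.single p (1:F) ∈
      Submodule.span F (relators F N i j k ∪ canonSet F N i j k c) := by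
  suffices H : ∀ (n : ℕ) (q : PathIdx N i j k), muC c q.1 = n →
      Finsupp.single q (1:F) ∈
        Submodule.span F (relators F N i j k ∪ canonSet F N i j k c) from H _ p rfl
  intro n
  induction n using Nat.strong_induction_on with
  | _ n IH =>
    intro p hmu
    by_cases hf : ∃ A B : List Bool, p.1 = A ++ ([c, !c] ++ B)
    · obtain ⟨A, B, hAB⟩ := hf
      have hp2 : okSteps N i p.1 ∧ targetV i p.1 = j ∧ p.1.length = k := p.2
      obtain ⟨hok, htar, hlen⟩ := hp2
      rw [hAB, okSteps_append] at hok
      rw [hAB, targetV_append] at htar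
      rw [hAB] at hlen
      obtain ⟨hokA, hokM⟩ := hok
      set v := targetV i A with hv
      cases c
      · -- c = false : pattern is a valley [false, true] starting at v
        simp only [Bool.not_false] at hAB hokM htar hlen hmu ⊢
        rw [okSteps_downup] at hokM
        obtain ⟨hm1, hm2, hm3⟩ := hokM
        rw [targetV_downup] at htar
        have hass : A ++ [false, true] ++ B = p.1 := by rw [hAB, List.append_assoc]
        have hp : IsPathFrom N i j k (A ++ [false, true] ++ B) := hass ▸ p.2
        have hpe : Finsupp.single p (1:F) =
            Finsupp.single (⟨A ++ [false, true] ++ B, hp⟩ : PathIdx N i j k) 1 := by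
          congr 1
          exact Subtype.ext hass.symm
        by_cases hvN : v = (N:ℤ)
        · -- boundary relator x_{N-1}* x_{N-1}
          refine Submodule.subset_span (Or.inl ⟨A, B, Or.inr (Or.inl ⟨hp, ?_, hpe⟩)⟩)
          rw [← hv, hvN]
        · -- interior: rewrite the valley into a peak
          have hq : IsPathFrom N i j k (A ++ [true, false] ++ B) := by
            rw [List.append_assoc]
            refine ⟨(okSteps_append _ _ _ _).2 ⟨hokA, ?_⟩, ?_, ?_⟩
            · rw [← hv, okSteps_updown]
              exact ⟨by omega, by omega, hm3⟩
            · rw [targetV_append, ← hv, targetV_updown, htar]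
            · have := hlen
              simp only [List.length_append, List.length_cons, List.length_nil] at this ⊢
              omega
          have q : PathIdx N i j k := ⟨A ++ [true, false] ++ B, hq⟩
          let p' : PathIdx N i j k := ⟨A ++ [false, true] ++ B, hp⟩
          let q' : PathIdx N i j k := ⟨A ++ [true, false] ++ B, hq⟩
          have hrel : Finsupp.single p' (1:F) - Finsupp.single q' 1 ∈ relators F N i j k :=
            ⟨A, B, Or.inr (Or.inr ⟨hp, hq, by rw [← hv]; omega, by rw [← hv]; omega, rfl⟩)⟩
          have hq1 : q'.1 = A ++ ([true, false] ++ B) := List.append_assoc A [true, false] B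
          have hmq : muC false q'.1 + 1 = n := by
            rw [← hmu, hAB, hq1]
            have hswap := muC_swap false A B
            simp only [Bool.not_false] at hswap
            exact hswap.symm
          have hIH := IH (muC false q'.1) (by omega) q' rfl
          have heq : Finsupp.single p (1:F) =
              (Finsupp.single p' (1:F) - Finsupp.single q' 1) + Finsupp.single q' 1 := by
            rw [hpe]
            abel
          rw [heq]
          exact Submodule.add_mem _ (Submodule.subset_span (Or.inl hrel)) hIH
      · -- c = true : pattern is a peak [true, false] starting at v
        simp only [Bool.not_true] at hAB hokM htar hlen hmu ⊢
        rw [okSteps_updown] at hokM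
        obtain ⟨hm1, hm2, hm3⟩ := hokM
        rw [targetV_updown] at htar
        have hass : A ++ [true, false] ++ B = p.1 := by rw [hAB, List.append_assoc]
        have hp : IsPathFrom N i j k (A ++ [true, false] ++ B) := hass ▸ p.2
        have hpe : Finsupp.single p (1:F) =
            Finsupp.single (⟨A ++ [true, false] ++ B, hp⟩ : PathIdx N i j k) 1 := by
          congr 1
          exact Subtype.ext hass.symm
        by_cases hv1 : v = 1
        · refine Submodule.subset_span (Or.inl ⟨A, B, Or.inl ⟨hp, ?_, hpe⟩⟩)
          rw [← hv, hv1]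
        · have hq : IsPathFrom N i j k (A ++ [false, true] ++ B) := by
            rw [List.append_assoc]
            refine ⟨(okSteps_append _ _ _ _).2 ⟨hokA, ?_⟩, ?_, ?_⟩
            · rw [← hv, okSteps_downup]
              exact ⟨by omega, by omega, hm3⟩
            · rw [targetV_append, ← hv, targetV_downup, htar]
            · have := hlen
              simp only [List.length_append, List.length_cons, List.length_nil] at this ⊢
              omega
          let p' : PathIdx N i j k := ⟨A ++ [true, false] ++ B, hp⟩
          let q' : PathIdx N i j k := ⟨A ++ [false, true] ++ B, hq⟩
          have hrel : Finsupp.single q' (1:F) - Finsupp.single p' 1 ∈ relators F N i j k :=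
            ⟨A, B, Or.inr (Or.inr ⟨hq, hp, by rw [← hv]; omega, by rw [← hv]; omega, rfl⟩)⟩
          have hq1 : q'.1 = A ++ ([false, true] ++ B) := List.append_assoc A [false, true] B
          have hmq : muC true q'.1 + 1 = n := by
            rw [← hmu, hAB, hq1]
            have hswap := muC_swap true A B
            simp only [Bool.not_true] at hswap
            exact hswap.symm
          have hIH := IH (muC true q'.1) (by omega) q' rfl
          have heq : Finsupp.single p (1:F) = Finsupp.single q' 1
              - (Finsupp.single q' (1:F) - Finsupp.single p' 1) := by
            rw [hpe]
            abel
          rw [heq]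
          exact Submodule.sub_mem _ hIH (Submodule.subset_span (Or.inl hrel))
    · push_neg at hf
      obtain ⟨a, b, hab⟩ := eq_replicate_of_no_factor c p.1 hf
      exact Submodule.subset_span (Or.inr ⟨p, a, b, hab, rfl⟩)

lemma span_union_top (c : Bool) :
    Submodule.span F (relators F N i j k ∪ canonSet F N i j k c) = ⊤ := by
  refine le_antisymm le_top ?_
  rw [← (Finsupp.basisSingleOne (R := F) (ι := PathIdx N i j k)).span_eq]
  refine Submodule.span_le.2 ?_
  rintro x ⟨pp, rfl⟩
  simpa [Finsupp.coe_basisSingleOne] using single_mem_span c pp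

lemma span_relators_top (c : Bool)
    (h : ∀ (p : PathIdx N i j k) (a b : ℕ),
      p.1 ≠ List.replicate b (!c) ++ List.replicate a c) :
    Submodule.span F (relators F N i j k) = ⊤ := by
  refine le_antisymm le_top ?_
  rw [← span_union_top (F := F) (N := N) (i := i) (j := j) (k := k) c]
  refine Submodule.span_le.2 ?_
  rintro x (hx | ⟨p, a, b, hp, rfl⟩)
  · exact Submodule.subset_span hx
  · exact absurd hp (h p a b)

end Aux

/-- `dim_F e_i Γ_k e_j = 1` if `|i−j| ≤ k ≤ N−1−|N+1−i−j|` and `k ≡ i−j (mod 2)`,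
and `= 0` otherwise. -/
theorem stmt6 (F : Type*) [Field F] (N : ℕ) (hN : 1 ≤ N) (i j : ℤ)
    (hi : 1 ≤ i) (hiN : i ≤ (N : ℤ)) (hj : 1 ≤ j) (hjN : j ≤ (N : ℤ)) (k : ℕ) :
    Module.finrank F (PathComp F N i j k) =
      if |i - j| ≤ (k : ℤ) ∧ (k : ℤ) ≤ (N : ℤ) - 1 - |(N : ℤ) + 1 - i - j|
          ∧ (k : ℤ) % 2 = (i - j) % 2
        then 1 else 0 := by
  by_cases hcond : |i - j| ≤ (k : ℤ) ∧ (k : ℤ) ≤ (N : ℤ) - 1 - |(N : ℤ) + 1 - i - j|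
      ∧ (k : ℤ) % 2 = (i - j) % 2
  · rw [if_pos hcond]
    obtain ⟨h1, h2, h3⟩ := hcond
    have hd1 : -(k:ℤ) ≤ i - j := (abs_le.1 h1).1
    have hd2 : i - j ≤ (k:ℤ) := (abs_le.1 h1).2
    have hup : (k:ℤ) ≤ i + j - 2 := by
      rcases abs_cases ((N:ℤ) + 1 - i - j) with ⟨he, hsgn⟩ | ⟨he, hsgn⟩ <;> rw [he] at h2 <;> omega
    have hdn : (k:ℤ) ≤ 2*(N:ℤ) - i - j := by
      rcases abs_cases ((N:ℤ) + 1 - i - j) with ⟨he, hsgn⟩ | ⟨he, hsgn⟩ <;> rw [he] at h2 <;> omega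
    obtain ⟨a0, b0, ha0, hb0⟩ : ∃ a0 b0 : ℕ, 2*(a0:ℤ) = k + j - i ∧ 2*(b0:ℤ) = k + i - j :=
      ⟨(((k:ℤ) + j - i)/2).toNat, (((k:ℤ) + i - j)/2).toNat, by omega, by omega⟩
    have hok0 : okSteps N i (List.replicate b0 false ++ List.replicate a0 true) := by
      rw [okSteps_append, targetV_replicate_false, okSteps_replicate_false,
        okSteps_replicate_true]
      omega
    have hp0 : IsPathFrom N i j k (List.replicate b0 false ++ List.replicate a0 true) := by
      refine ⟨hok0, ?_, ?_⟩
      · rw [targetV_append, targetV_replicate_false, targetV_replicate_true]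
        omega
      · simp only [List.length_append, List.length_replicate]
        omega
    let p0 : PathIdx N i j k := ⟨List.replicate b0 false ++ List.replicate a0 true, hp0⟩
    have hcanon : canonSet F N i j k true ⊆ {Finsupp.single p0 (1:F)} := by
      rintro x ⟨p, a, b, hp, rfl⟩
      simp only [Bool.not_true] at hp
      obtain ⟨g1, g2, g3, g4, g5⟩ := canon_facts_true p a b hp
      have hab : a = a0 ∧ b = b0 := by constructor <;> omega
      have hpp : p = p0 := Subtype.ext (by rw [hp, hab.1, hab.2])
      simp [hpp]
    have hspan : Submodule.span F
        (insert (Finsupp.single p0 (1:F)) (relators F N i j k)) = ⊤ := by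
      refine le_antisymm le_top ?_
      rw [← span_union_top (F := F) (N := N) (i := i) (j := j) (k := k) true]
      refine Submodule.span_mono ?_
      rintro x (hx | hx)
      · exact Set.mem_insert_of_mem _ hx
      · have := hcanon hx
        rw [Set.mem_singleton_iff] at this
        rw [this]
        exact Set.mem_insert _ _
    set f : (PathIdx N i j k →₀ F) →ₗ[F] F :=
      Finsupp.linearCombination F (fun _ => (1:F)) with hf
    have hker : Submodule.span F (relators F N i j k) ≤ LinearMap.ker f := by
      rw [Submodule.span_le]
      rintro x ⟨A, B, hx | hx | hx⟩
      · obtain ⟨h, hA1, rfl⟩ := hx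
        exfalso
        have hok : okSteps N i (A ++ [true, false] ++ B) := h.1
        have htar : targetV i (A ++ [true, false] ++ B) = j := h.2.1
        have hlen : (A ++ [true, false] ++ B).length = k := h.2.2
        rw [List.append_assoc, targetV_append, hA1, targetV_updown] at htar
        have e1 := targetV_est A i
        rw [hA1] at e1
        have e2 := targetV_est B 1
        rw [htar] at e2
        rw [List.append_assoc] at hlen
        simp only [List.length_append, List.length_cons, List.length_nil] at hlen
        omega
      · obtain ⟨h, hA1, rfl⟩ := hx
        exfalso
        have htar : targetV i (A ++ [false, true] ++ B) = j := h.2.1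
        have hlen : (A ++ [false, true] ++ B).length = k := h.2.2
        rw [List.append_assoc, targetV_append, hA1, targetV_downup] at htar
        have e1 := targetV_est A i
        rw [hA1] at e1
        have e2 := targetV_est B (N:ℤ)
        rw [htar] at e2
        rw [List.append_assoc] at hlen
        simp only [List.length_append, List.length_cons, List.length_nil] at hlen
        omega
      · obtain ⟨hq1, hq2, _, _, rfl⟩ := hx
        simp only [SetLike.mem_coe, LinearMap.mem_ker, map_sub]
        simp only [hf, Finsupp.linearCombination_single, smul_eq_mul, mul_one, sub_self]
        exact sub_eq_zero.2 ((Finsupp.linearCombination_single F (v := fun _ : PathIdx N i j k => (1:F))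
          (1:F) ⟨_, hq1⟩).trans (Finsupp.linearCombination_single F (v := fun _ : PathIdx N i j k => (1:F))
          (1:F) ⟨_, hq2⟩).symm)
    let fbar := Submodule.liftQ (Submodule.span F (relators F N i j k)) f hker
    have hx0 : fbar (Submodule.Quotient.mk (Finsupp.single p0 (1:F))) = 1 := by
      rw [Submodule.liftQ_apply]
      simp [hf, Finsupp.linearCombination_single]
    have hne : (Submodule.Quotient.mk (Finsupp.single p0 (1:F)) : PathComp F N i j k) ≠ 0 := by
      intro h0
      rw [show (Submodule.Quotient.mk (Finsupp.single p0 (1:F)) :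
          (PathIdx N i j k →₀ F) ⧸ Submodule.span F (relators F N i j k)) = 0 from h0,
        map_zero] at hx0
      exact one_ne_zero hx0.symm
    have hallw : ∀ w : PathComp F N i j k, ∃ c : F,
        c • (Submodule.Quotient.mk (Finsupp.single p0 (1:F)) : PathComp F N i j k) = w := by
      intro w
      obtain ⟨y, rfl⟩ := Submodule.Quotient.mk_surjective
        (Submodule.span F (relators F N i j k)) w
      have hy : y ∈ Submodule.span F
          (insert (Finsupp.single p0 (1:F)) (relators F N i j k)) := by
        rw [hspan]
        trivial
      rw [Submodule.mem_span_insert] at hy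
      obtain ⟨c, z, hz, rfl⟩ := hy
      refine ⟨c, ?_⟩
      show _ = (Submodule.Quotient.mk (c • Finsupp.single p0 (1:F) + z) :
        (PathIdx N i j k →₀ F) ⧸ Submodule.span F (relators F N i j k))
      rw [Submodule.Quotient.mk_add, Submodule.Quotient.mk_smul,
        (Submodule.Quotient.mk_eq_zero _).2 hz, add_zero]
    exact finrank_eq_one _ hne hallw
  · rw [if_neg hcond]
    have htop : Submodule.span F (relators F N i j k) = ⊤ := by
      by_cases hup : ¬(|i - j| ≤ (k:ℤ)) ∨ ¬((k:ℤ) % 2 = (i - j) % 2) ∨ (i:ℤ) + j - 1 ≤ k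
      · refine span_relators_top true ?_
        intro p a b hp
        simp only [Bool.not_true] at hp
        obtain ⟨g1, g2, g3, g4, g5⟩ := canon_facts_true p a b hp
        rcases abs_cases (i - j) with ⟨he, hsgn⟩ | ⟨he, hsgn⟩ <;>
          rcases hup with h | h | h <;> rw [he] at * <;> omega
      · push_neg at hup
        obtain ⟨hA, hC, hk⟩ := hup
        have hk2 : 2*(N:ℤ) - i - j + 1 ≤ k := by
          by_contra hcon
          refine hcond ⟨hA, ?_, hC⟩
          rcases abs_cases ((N:ℤ) + 1 - i - j) with ⟨he, hsgn⟩ | ⟨he, hsgn⟩ <;>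
            rw [he] <;> omega
        refine span_relators_top false ?_
        intro p a b hp
        simp only [Bool.not_false] at hp
        obtain ⟨g1, g2, g3, g4, g5⟩ := canon_facts_false p a b hp
        omega
    haveI hss : Subsingleton (PathComp F N i j k) := by
      unfold PathComp
      rw [Submodule.Quotient.subsingleton_iff]
      exact htop
    exact Module.finrank_zero_of_subsingleton
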